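/- arXiv:math/0703666 — 2 statements merged into one kernel-verified Lean document; each statement's English description precedes it below -/
import Mathlib

section
/- If (s_1, ..., s_p) is a normal sequence of simple braids, then necessarily s_1 = gcd_L(s_1 s_2 ... s_p, Δ_n). -/
/-- Relations of the braid group presentation. -/
def braidRels (n : ℕ) : Set (FreeGroup (Fin (n - 1))) :=
  {r | (∃ i j : Fin (n - 1), (i : ℕ) + 2 ≤ (j : ℕ) ∧
          r = FreeGroup.of i * FreeGroup.of j * (FreeGroup.of j * FreeGroup.of i)⁻¹) ∨
       (∃ i j : Fin (n - 1), (i : ℕ) + 1 = (j : ℕ) ∧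
          r = FreeGroup.of i * FreeGroup.of j * FreeGroup.of i *
              (FreeGroup.of j * FreeGroup.of i * FreeGroup.of j)⁻¹)}

/-- Artin's braid group `B_n`. -/
def BraidGroup (n : ℕ) : Type := PresentedGroup (braidRels n)

instance (n : ℕ) : Group (BraidGroup n) :=
  inferInstanceAs (Group (PresentedGroup (braidRels n)))

/-- The Artin generator `σ_{i+1}` (0-indexed `i`). -/
def braidGen {n : ℕ} (i : Fin (n - 1)) : BraidGroup n := PresentedGroup.of i

/-- The positive braid monoid `B_n^+` (submonoid generated by the `σ_i`). -/
def PosBraid (n : ℕ) : Submonoid (BraidGroup n) :=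
  Submonoid.closure (Set.range (braidGen (n := n)))

/-- `x` left-divides `y` (with positive quotient). -/
def DividesL {n : ℕ} (x y : BraidGroup n) : Prop := ∃ z ∈ PosBraid n, y = x * z

/-- `x` right-divides `y` (with positive quotient). -/
def DividesR {n : ℕ} (x y : BraidGroup n) : Prop := ∃ z ∈ PosBraid n, y = z * x

/-- Auxiliary: `deltaAux n m` is the Garside element `Δ_m` viewed inside `B_n`. -/
def deltaAux (n : ℕ) : ℕ → BraidGroup n
  | 0 => 1
  | m + 1 =>
      ((List.range m).map (fun i =>
        if h : i < n - 1 then braidGen ⟨i, h⟩ else 1)).prod * deltaAux n m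

/-- Garside's element `Δ_n = σ_1⋯σ_{n-1} Δ_{n-1}`. -/
def braidDelta (n : ℕ) : BraidGroup n := deltaAux n n

/-- A simple braid: a (positive) divisor of `Δ_n`. -/
def Simple {n : ℕ} (s : BraidGroup n) : Prop :=
  s ∈ PosBraid n ∧ DividesL s (braidDelta n)

/-- Normality of a pair, in the divisor form: every `σ_i` left-dividing `t`
right-divides `s`. -/
def NormalPair {n : ℕ} (s t : BraidGroup n) : Prop :=
  ∀ i : Fin (n - 1), DividesL (braidGen i) t → DividesR (braidGen i) s

/-- `g` is the left gcd of `x` and `y` in `B_n^+`. -/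
def IsLeftGcd {n : ℕ} (g x y : BraidGroup n) : Prop :=
  g ∈ PosBraid n ∧ DividesL g x ∧ DividesL g y ∧
    ∀ d ∈ PosBraid n, DividesL d x → DividesL d y → DividesL d g

/-- Normality of a pair, in the gcd form: `s = gcd_L(st, Δ_n)`. -/
def GNormal {n : ℕ} (s t : BraidGroup n) : Prop :=
  IsLeftGcd s (s * t) (braidDelta n)

/-- `u` is the left lcm of `x` and `y`. -/
def IsLeftLcm {n : ℕ} (u x y : BraidGroup n) : Prop :=
  DividesR x u ∧ DividesR y u ∧ ∀ v, DividesR x v → DividesR y v → DividesR u v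

/-- The position `i` inside `Fin n`. -/
def finL {n : ℕ} (i : Fin (n - 1)) : Fin n := ⟨i, by have := i.isLt; omega⟩

/-- The position `i + 1` inside `Fin n`. -/
def finR {n : ℕ} (i : Fin (n - 1)) : Fin n := ⟨(i : ℕ) + 1, by have := i.isLt; omega⟩

/-- `i` is a descent of the permutation `f` : `f(i) > f(i+1)`. -/
def Descent {n : ℕ} (f : Equiv.Perm (Fin n)) (i : Fin (n - 1)) : Prop :=
  f (finR i) < f (finL i)

/-- `i` is a recoil of the permutation `f` : `f⁻¹(i) > f⁻¹(i+1)`. -/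
def Recoil {n : ℕ} (f : Equiv.Perm (Fin n)) (i : Fin (n - 1)) : Prop :=
  f⁻¹ (finR i) < f⁻¹ (finL i)

/-- Braid words: letters are a generator index together with a sign
(`true` = positive letter `σ_i`, `false` = negative letter `σ_i⁻¹`). -/
abbrev BWord (n : ℕ) := List (Fin (n - 1) × Bool)

/-- The braid represented by a braid word. -/
def evalWord {n : ℕ} (w : BWord n) : BraidGroup n :=
  (w.map (fun x => if x.2 then braidGen x.1 else (braidGen x.1)⁻¹)).prod

namespace BraidProof
variable {n : ℕ}

/-- adjacency: `|i-j| = 1` -/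
def adj (i j : Fin (n-1)) : Prop := (i:ℕ)+1 = j ∨ (j:ℕ)+1 = i
/-- far: `|i-j| ≥ 2` -/
def far (i j : Fin (n-1)) : Prop := (i:ℕ)+2 ≤ j ∨ (j:ℕ)+2 ≤ i

lemma adj.symm {i j : Fin (n-1)} (h : adj i j) : adj j i := h.elim .inr .inl
lemma far.symm {i j : Fin (n-1)} (h : far i j) : far j i := h.elim .inr .inl
lemma far_of_le {i j : Fin (n-1)} (h : (i:ℕ)+2 ≤ j) : far i j := .inl h

lemma rel_cases (i j : Fin (n-1)) : i = j ∨ adj i j ∨ far i j := by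
  rcases Nat.lt_trichotomy (i:ℕ) (j:ℕ) with h | h | h
  · rcases Nat.lt_or_ge ((i:ℕ)+1) j with h2 | h2
    · exact .inr (.inr (.inl (by omega)))
    · exact .inr (.inl (.inl (by omega)))
  · exact .inl (Fin.ext h)
  · rcases Nat.lt_or_ge ((j:ℕ)+1) i with h2 | h2
    · exact .inr (.inr (.inr (by omega)))
    · exact .inr (.inl (.inr (by omega)))

lemma not_adj_self {i : Fin (n-1)} : ¬ adj i i := by rintro (h|h) <;> omega
lemma not_far_self {i : Fin (n-1)} : ¬ far i i := by rintro (h|h) <;> omega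
lemma adj_ne {i j : Fin (n-1)} (h : adj i j) : i ≠ j := by
  rintro rfl; exact not_adj_self h
lemma far_ne {i j : Fin (n-1)} (h : far i j) : i ≠ j := by
  rintro rfl; exact not_far_self h
lemma not_adj_and_far {i j : Fin (n-1)} (h : adj i j) (h' : far i j) : False := by
  rcases h with h|h <;> rcases h' with h'|h' <;> omega

/-- single rewriting step on positive braid words -/
inductive BStep : List (Fin (n-1)) → List (Fin (n-1)) → Prop
  | swap (x y : List (Fin (n-1))) {i j : Fin (n-1)} (h : far i j) :
      BStep (x ++ i :: j :: y) (x ++ j :: i :: y)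
  | braid (x y : List (Fin (n-1))) {i j : Fin (n-1)} (h : adj i j) :
      BStep (x ++ i :: j :: i :: y) (x ++ j :: i :: j :: y)

/-- positive equivalence of braid words -/
def Eqv : List (Fin (n-1)) → List (Fin (n-1)) → Prop := Relation.ReflTransGen BStep

lemma BStep.symm' {u v : List (Fin (n-1))} (h : BStep u v) : BStep v u := by
  cases h with
  | swap x y h => exact .swap x y h.symm
  | braid x y h => exact .braid x y h.symm

@[refl] lemma Eqv.refl (u : List (Fin (n-1))) : Eqv u u := Relation.ReflTransGen.refl

lemma Eqv.rfl {u : List (Fin (n-1))} : Eqv u u := Relation.ReflTransGen.refl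

lemma Eqv.trans {u v w : List (Fin (n-1))} (h : Eqv u v) (h' : Eqv v w) : Eqv u w :=
  Relation.ReflTransGen.trans h h'

lemma Eqv.symm {u v : List (Fin (n-1))} (h : Eqv u v) : Eqv v u := by
  induction h with
  | refl => exact .rfl
  | tail h₁ h₂ ih => exact Relation.ReflTransGen.trans (Relation.ReflTransGen.single h₂.symm') ih

lemma BStep.eqv {u v : List (Fin (n-1))} (h : BStep u v) : Eqv u v :=
  Relation.ReflTransGen.single h

lemma BStep.append_left {u v : List (Fin (n-1))} (w : List (Fin (n-1))) (h : BStep u v) :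
    BStep (w ++ u) (w ++ v) := by
  cases h with
  | swap x y h => rw [← List.append_assoc, ← List.append_assoc]; exact .swap (w ++ x) y h
  | braid x y h => rw [← List.append_assoc, ← List.append_assoc]; exact .braid (w ++ x) y h

lemma BStep.append_right {u v : List (Fin (n-1))} (h : BStep u v) (w : List (Fin (n-1))) :
    BStep (u ++ w) (v ++ w) := by
  cases h with
  | swap x y h =>
      have := BStep.swap x (y ++ w) h
      simpa using this
  | braid x y h =>
      have := BStep.braid x (y ++ w) h
      simpa using this

lemma Eqv.append_left (w : List (Fin (n-1))) {u v : List (Fin (n-1))} (h : Eqv u v) :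
    Eqv (w ++ u) (w ++ v) := by
  induction h with
  | refl => exact .rfl
  | tail h₁ h₂ ih => exact ih.trans (h₂.append_left w).eqv

lemma Eqv.append_right {u v : List (Fin (n-1))} (h : Eqv u v) (w : List (Fin (n-1))) :
    Eqv (u ++ w) (v ++ w) := by
  induction h with
  | refl => exact .rfl
  | tail h₁ h₂ ih => exact ih.trans (h₂.append_right w).eqv

lemma Eqv.append {u v u' v' : List (Fin (n-1))} (h : Eqv u u') (h' : Eqv v v') :
    Eqv (u ++ v) (u' ++ v') := (h.append_right v).trans (h'.append_left u')

lemma Eqv.cons (a : Fin (n-1)) {u v : List (Fin (n-1))} (h : Eqv u v) :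
    Eqv (a :: u) (a :: v) := h.append_left [a]

lemma BStep.length {u v : List (Fin (n-1))} (h : BStep u v) : u.length = v.length := by
  cases h <;> simp

lemma Eqv.length {u v : List (Fin (n-1))} (h : Eqv u v) : u.length = v.length := by
  induction h with
  | refl => rfl
  | tail h₁ h₂ ih => exact ih.trans h₂.length

/-- head swap -/
lemma swap_head {i j : Fin (n-1)} (h : far i j) (t : List (Fin (n-1))) :
    Eqv (i :: j :: t) (j :: i :: t) := (BStep.swap [] t h).eqv

/-- head braid -/
lemma braid_head {i j : Fin (n-1)} (h : adj i j) (t : List (Fin (n-1))) :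
    Eqv (i :: j :: i :: t) (j :: i :: j :: t) := (BStep.braid [] t h).eqv

/-- complement word: `a * cw a b = b * cw b a` is the lcm of a,b -/
def cw (a b : Fin (n-1)) : List (Fin (n-1)) :=
  if a = b then [] else if (a:ℕ)+1 = b ∨ (b:ℕ)+1 = a then [b, a] else [b]

lemma cw_self (a : Fin (n-1)) : cw a a = [] := by simp [cw]
lemma cw_adj {a b : Fin (n-1)} (h : adj a b) : cw a b = [b, a] := by
  rw [cw, if_neg (adj_ne h), if_pos (show (a:ℕ)+1 = b ∨ (b:ℕ)+1 = a from h)]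
lemma cw_far {a b : Fin (n-1)} (h : far a b) : cw a b = [b] := by
  rw [cw, if_neg (far_ne h), if_neg]
  rintro (h'|h') <;> rcases h with h|h <;> omega

/-- the two expressions of the atom lcm agree -/
lemma lcm_word_eqv {a b : Fin (n-1)} :
    Eqv (a :: cw a b) (b :: cw b a) := by
  rcases rel_cases a b with rfl | h | h
  · exact .rfl
  · rw [cw_adj h, cw_adj h.symm]; exact braid_head h []
  · rw [cw_far h, cw_far h.symm]; exact swap_head h []


lemma BStep_cons_cases {a : Fin (n-1)} {P W : List (Fin (n-1))} (h : BStep (a :: P) W) :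
    (∃ P', W = a :: P' ∧ BStep P P') ∨
    (∃ j y, far a j ∧ P = j :: y ∧ W = j :: a :: y) ∨
    (∃ j y, adj a j ∧ P = j :: a :: y ∧ W = j :: a :: j :: y) := by
  generalize hu : a :: P = u at h
  cases h with
  | swap x y hfar =>
    rename_i i j
    cases x with
    | nil =>
        simp only [List.nil_append] at hu
        obtain ⟨rfl, rfl⟩ : a = i ∧ P = j :: y := by
          refine ⟨?_, ?_⟩ <;> injection hu <;> simp_all
        exact .inr (.inl ⟨j, y, hfar, rfl, rfl⟩)
    | cons c x' =>
        rw [List.cons_append] at hu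
        obtain ⟨rfl, rfl⟩ : a = c ∧ P = x' ++ i :: j :: y := by
          refine ⟨?_, ?_⟩ <;> injection hu <;> simp_all
        exact .inl ⟨x' ++ j :: i :: y, by simp, .swap x' y hfar⟩
  | braid x y hadj =>
    rename_i i j
    cases x with
    | nil =>
        simp only [List.nil_append] at hu
        obtain ⟨rfl, rfl⟩ : a = i ∧ P = j :: i :: y := by
          refine ⟨?_, ?_⟩ <;> injection hu <;> simp_all
        exact .inr (.inr ⟨j, y, hadj, rfl, rfl⟩)
    | cons c x' =>
        rw [List.cons_append] at hu
        obtain ⟨rfl, rfl⟩ : a = c ∧ P = x' ++ i :: j :: i :: y := by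
          refine ⟨?_, ?_⟩ <;> injection hu <;> simp_all
        exact .inl ⟨x' ++ j :: i :: j :: y, by simp, .braid x' y hadj⟩

set_option maxHeartbeats 2000000 in
/-- Garside's division lemma (Theorem H). -/
theorem braidH (N : ℕ) : ∀ (a b : Fin (n-1)) (P Q : List (Fin (n-1))),
    Eqv (a :: P) (b :: Q) → P.length < N →
    ∃ R, Eqv P (cw a b ++ R) ∧ Eqv Q (cw b a ++ R) := by
  induction N with
  | zero => intro a b P Q h hl; omega
  | succ N IHN =>
    intro a b P Q h hl
    have main : ∀ u, Eqv u (b :: Q) → ∀ a' P', u = a' :: P' → P'.length < N + 1 →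
        ∃ R, Eqv P' (cw a' b ++ R) ∧ Eqv Q (cw b a' ++ R) := by
      intro u hu
      induction hu using Relation.ReflTransGen.head_induction_on with
      | refl =>
          rintro a' P' hP hl'
          injection hP with h1 h2
          subst h1; subst h2
          exact ⟨Q, by rw [cw_self]; exact .rfl, by rw [cw_self]; exact .rfl⟩
      | head hstep hrest ih =>
          rintro a' P' rfl hl'
          rcases BStep_cons_cases hstep with ⟨P₁, rfl, hPP₁⟩ | ⟨j, y, haj, rfl, rfl⟩ |
            ⟨j, y, haj, rfl, rfl⟩
          · -- rewrite inside the tail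
            obtain ⟨R, h1, h2⟩ := ih a' P₁ rfl (by have := hPP₁.length; omega)
            exact ⟨R, hPP₁.eqv.trans h1, h2⟩
          · -- Shape F : far a' j, P' = j :: y
            obtain ⟨S, hS1, hS2⟩ := ih j (a' :: y) rfl (by simp at hl' ⊢; omega)
            have hly : y.length < N := by simp at hl'; omega
            rcases rel_cases j b with rfl | hjb | hjb
            · -- F1 : j = b
              rw [cw_self, List.nil_append] at hS1 hS2
              exact ⟨y, by rw [cw_far haj]; exact .rfl,
                by rw [cw_far haj.symm]; exact hS2.trans hS1.symm⟩
            · -- adj j b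
              rw [cw_adj hjb] at hS1; rw [cw_adj hjb.symm] at hS2
              rcases rel_cases a' b with rfl | hab | hab
              · -- F5 : vacuous
                exact absurd haj (fun hf => not_adj_and_far hjb.symm hf)
              · -- F7 : adj a' b
                have hlS : S.length < N := by have := hS1.length; simp at this; omega
                obtain ⟨T, hT1, hT2⟩ := IHN a' b y (j :: S) hS1 hly
                rw [cw_adj hab] at hT1; rw [cw_adj hab.symm] at hT2
                obtain ⟨U, hU1, hU2⟩ := IHN j a' S (b :: T) hT2 hlS
                rw [cw_far haj.symm] at hU1; rw [cw_far haj] at hU2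
                have hlT : T.length < N := by have := hT2.length; simp at this; omega
                obtain ⟨V, hV1, hV2⟩ := IHN b j T U hU2 hlT
                rw [cw_adj hjb.symm] at hV1; rw [cw_adj hjb] at hV2
                refine ⟨j :: b :: a' :: V, ?_, ?_⟩
                · rw [cw_adj hab]
                  exact (hT1.cons j).trans <|
                    ((((hV1.cons a').cons b).cons j)).trans <|
                    (((swap_head haj (b::V)).cons b).cons j).trans <|
                    (braid_head hjb (a'::b::V)).trans <|
                    (((braid_head hab.symm V).cons j).cons b).trans <|
                    ((swap_head haj.symm (b::a'::V)).cons b)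
                · rw [cw_adj hab.symm]
                  exact hS2.trans <|
                    ((hU1.cons b).cons j).trans <|
                    ((((hV2.cons a').cons b).cons j)).trans <|
                    (((braid_head hab.symm (j::V)).cons j)).trans <|
                    (swap_head haj.symm (b::a'::j::V)).trans <|
                    ((((swap_head haj V).cons b).cons j).cons a').trans <|
                    ((braid_head hjb (a'::V)).cons a')
              · -- F6 : far a' b
                have hlS : S.length < N := by have := hS1.length; simp at this; omega
                obtain ⟨T, hT1, hT2⟩ := IHN a' b y (j :: S) hS1 hly
                rw [cw_far hab] at hT1; rw [cw_far hab.symm] at hT2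
                obtain ⟨U, hU1, hU2⟩ := IHN j a' S T hT2 hlS
                rw [cw_far haj.symm] at hU1; rw [cw_far haj] at hU2
                refine ⟨j :: b :: U, ?_, ?_⟩
                · rw [cw_far hab]
                  exact (hT1.cons j).trans <| ((hU2.cons b).cons j).trans <|
                    braid_head hjb U
                · rw [cw_far hab.symm]
                  exact hS2.trans <| ((hU1.cons b).cons j).trans <|
                    (((swap_head hab.symm U).cons j)).trans <|
                    (swap_head haj.symm (b::U))
            · -- far j b
              rw [cw_far hjb] at hS1; rw [cw_far hjb.symm] at hS2
              rcases rel_cases a' b with rfl | hab | hab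
              · -- F2 : a' = b
                obtain ⟨T, hT1, hT2⟩ := IHN a' a' y S hS1 hly
                rw [cw_self, List.nil_append] at hT1 hT2
                refine ⟨j :: y, ?_, ?_⟩
                · rw [cw_self]; exact .rfl
                · rw [cw_self]; exact hS2.trans ((hT2.trans hT1.symm).cons j)
              · -- F4 : adj a' b
                obtain ⟨T, hT1, hT2⟩ := IHN a' b y S hS1 hly
                rw [cw_adj hab] at hT1; rw [cw_adj hab.symm] at hT2
                refine ⟨j :: T, ?_, ?_⟩
                · rw [cw_adj hab]
                  exact (hT1.cons j).trans <| (swap_head hjb (a'::T)).trans <|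
                    ((swap_head haj.symm T).cons b)
                · rw [cw_adj hab.symm]
                  exact hS2.trans <| (hT2.cons j).trans <|
                    (swap_head haj.symm (b::T)).trans <|
                    ((swap_head hjb T).cons a')
              · -- F3 : far a' b
                obtain ⟨T, hT1, hT2⟩ := IHN a' b y S hS1 hly
                rw [cw_far hab] at hT1; rw [cw_far hab.symm] at hT2
                refine ⟨j :: T, ?_, ?_⟩
                · rw [cw_far hab]
                  exact (hT1.cons j).trans (swap_head hjb T)
                · rw [cw_far hab.symm]
                  exact hS2.trans <| (hT2.cons j).trans (swap_head haj.symm T)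
          · -- Shape B : adj a' j, P' = j :: a' :: y
            obtain ⟨S, hS1, hS2⟩ := ih j (a' :: j :: y) rfl (by simp at hl' ⊢; omega)
            have hly : y.length < N := by simp at hl'; omega
            have hljy : (j :: y).length < N := by simp at hl' ⊢; omega
            rcases rel_cases j b with rfl | hjb | hjb
            · -- B1 : j = b
              rw [cw_self, List.nil_append] at hS1 hS2
              exact ⟨y, by rw [cw_adj haj]; exact .rfl,
                by rw [cw_adj haj.symm]; exact hS2.trans hS1.symm⟩
            · -- adj j b
              rw [cw_adj hjb] at hS1; rw [cw_adj hjb.symm] at hS2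
              rcases rel_cases a' b with rfl | hab | hab
              · -- B5 : a' = b
                obtain ⟨T, hT1, hT2⟩ := IHN a' a' (j :: y) (j :: S) hS1 hljy
                rw [cw_self, List.nil_append] at hT1 hT2
                obtain ⟨U, hU1, hU2⟩ := IHN j j y S (hT1.trans hT2.symm) hly
                rw [cw_self, List.nil_append] at hU1 hU2
                refine ⟨j :: a' :: y, ?_, ?_⟩
                · rw [cw_self]; exact .rfl
                · rw [cw_self]
                  exact hS2.trans (((hU2.trans hU1.symm).cons a').cons j)
              · -- B7 : vacuous
                exfalso
                rcases haj with h1|h1 <;> rcases hjb with h2|h2 <;>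
                  rcases hab with h3|h3 <;> omega
              · -- B6 : far a' b
                obtain ⟨T, hT1, hT2⟩ := IHN a' b (j :: y) (j :: S) hS1 hljy
                rw [cw_far hab] at hT1; rw [cw_far hab.symm] at hT2
                obtain ⟨U, hU1, hU2⟩ := IHN j b y T hT1 hly
                rw [cw_adj hjb] at hU1; rw [cw_adj hjb.symm] at hU2
                have hlS : S.length < N := by have := hS1.length; simp at this; omega
                obtain ⟨V, hV1, hV2⟩ := IHN j a' S T hT2 hlS
                rw [cw_adj haj.symm] at hV1; rw [cw_adj haj] at hV2
                have hlbU : (b :: U).length < N := by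
                  have := hU1.length; simp at this ⊢; omega
                obtain ⟨W, hW1, hW2⟩ := IHN j j (b :: U) (a' :: V)
                  (hU2.symm.trans hV2) hlbU
                rw [cw_self, List.nil_append] at hW1 hW2
                have hlU : U.length < N := by have := hU1.length; simp at this; omega
                obtain ⟨X, hX1, hX2⟩ := IHN b a' U V (hW1.trans hW2.symm) hlU
                rw [cw_far hab.symm] at hX1; rw [cw_far hab] at hX2
                refine ⟨j :: b :: a' :: j :: X, ?_, ?_⟩
                · rw [cw_far hab]
                  exact ((hU1.cons a').cons j).trans <|
                    (((((hX1.cons j).cons b).cons a').cons j)).trans <|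
                    ((swap_head hab (j::a'::X)).cons j).trans <|
                    ((((braid_head haj X).cons b).cons j)).trans <|
                    (braid_head hjb (a'::j::X))
                · rw [cw_far hab.symm]
                  exact hS2.trans <|
                    ((hV1.cons b).cons j).trans <|
                    (((((hX2.cons j).cons a').cons b).cons j)).trans <|
                    ((swap_head hab.symm (j::b::X)).cons j).trans <|
                    ((((braid_head hjb.symm X).cons a').cons j)).trans <|
                    (braid_head haj.symm (b::j::X)).trans <|
                    (((swap_head hab (j::X)).cons j).cons a')
            · -- far j b
              rw [cw_far hjb] at hS1; rw [cw_far hjb.symm] at hS2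
              rcases rel_cases a' b with rfl | hab | hab
              · -- B2 : vacuous
                exact absurd haj (fun hf => not_adj_and_far hf hjb.symm)
              · -- B4 : adj a' b
                obtain ⟨T, hT1, hT2⟩ := IHN a' b (j :: y) S hS1 hljy
                rw [cw_adj hab] at hT1; rw [cw_adj hab.symm] at hT2
                obtain ⟨U, hU1, hU2⟩ := IHN j b y (a' :: T) hT1 hly
                rw [cw_far hjb] at hU1; rw [cw_far hjb.symm] at hU2
                have hlT : T.length < N := by have := hT1.length; simp at this; omega
                obtain ⟨V, hV1, hV2⟩ := IHN a' j T U hU2 hlT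
                rw [cw_adj haj] at hV1; rw [cw_adj haj.symm] at hV2
                refine ⟨j :: a' :: b :: V, ?_, ?_⟩
                · rw [cw_adj hab]
                  exact ((hU1.cons a').cons j).trans <|
                    ((((hV2.cons b).cons a').cons j)).trans <|
                    ((braid_head hab (j::V)).cons j).trans <|
                    (swap_head hjb (a'::b::j::V)).trans <|
                    ((((swap_head hjb.symm V).cons a').cons j).cons b).trans <|
                    ((braid_head haj.symm (b::V)).cons b)
                · rw [cw_adj hab.symm]
                  exact hS2.trans <| (hT2.cons j).trans <|
                    ((((hV1.cons b).cons a').cons j)).trans <|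
                    (((swap_head hjb.symm (a'::V)).cons a').cons j).trans <|
                    (braid_head haj.symm (b::a'::V)).trans <|
                    (((braid_head hab V).cons j).cons a').trans <|
                    ((swap_head hjb (a'::b::V)).cons a')
              · -- B3 : far a' b
                obtain ⟨T, hT1, hT2⟩ := IHN a' b (j :: y) S hS1 hljy
                rw [cw_far hab] at hT1; rw [cw_far hab.symm] at hT2
                obtain ⟨U, hU1, hU2⟩ := IHN j b y T hT1 hly
                rw [cw_far hjb] at hU1; rw [cw_far hjb.symm] at hU2
                refine ⟨j :: a' :: U, ?_, ?_⟩
                · rw [cw_far hab]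
                  exact ((hU1.cons a').cons j).trans <|
                    ((swap_head hab U).cons j).trans <|
                    (swap_head hjb (a'::U))
                · rw [cw_far hab.symm]
                  exact hS2.trans <| (hT2.cons j).trans <|
                    ((hU2.cons a').cons j).trans <|
                    (braid_head haj.symm U)
    exact main (a :: P) h a P rfl hl

/-- left cancellation of a letter -/
lemma cancel_head {a : Fin (n-1)} {u v : List (Fin (n-1))} (h : Eqv (a :: u) (a :: v)) :
    Eqv u v := by
  obtain ⟨R, h1, h2⟩ := braidH (u.length + 1) a a u v h (Nat.lt_succ_self _)
  rw [cw_self, List.nil_append] at h1 h2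
  exact h1.trans h2.symm

/-- left cancellation of a word -/
lemma cancel_word {w u v : List (Fin (n-1))} (h : Eqv (w ++ u) (w ++ v)) : Eqv u v := by
  induction w with
  | nil => simpa using h
  | cons a w ih => exact ih (cancel_head (by simpa using h))

lemma BStep.reverse {u v : List (Fin (n-1))} (h : BStep u v) :
    BStep u.reverse v.reverse := by
  cases h with
  | swap x y h =>
      have := BStep.swap y.reverse x.reverse h.symm
      simpa using this
  | braid x y h =>
      have := BStep.braid y.reverse x.reverse h
      simpa using this

lemma Eqv.reverse {u v : List (Fin (n-1))} (h : Eqv u v) : Eqv u.reverse v.reverse := by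
  induction h with
  | refl => exact .rfl
  | tail h₁ h₂ ih => exact ih.trans h₂.reverse.eqv

/-- right cancellation of a word -/
lemma cancel_word_right {u v w : List (Fin (n-1))} (h : Eqv (u ++ w) (v ++ w)) : Eqv u v := by
  have := h.reverse
  simp only [List.reverse_append] at this
  have := cancel_word this
  simpa using this.reverse

/-- word divisibility -/
def wdvd (u v : List (Fin (n-1))) : Prop := ∃ w, Eqv (u ++ w) v

lemma wdvd_refl (v : List (Fin (n-1))) : wdvd v v := ⟨[], by simpa using Eqv.rfl⟩

lemma wdvd_nil (v : List (Fin (n-1))) : wdvd [] v := ⟨v, by simpa using Eqv.rfl⟩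

lemma wdvd.trans {u v w : List (Fin (n-1))} (h : wdvd u v) (h' : wdvd v w) : wdvd u w := by
  obtain ⟨w1, h1⟩ := h; obtain ⟨w2, h2⟩ := h'
  exact ⟨w1 ++ w2, by rw [← List.append_assoc]; exact (h1.append_right w2).trans h2⟩

lemma wdvd_of_eqv_left {u u' v : List (Fin (n-1))} (e : Eqv u u') (h : wdvd u' v) :
    wdvd u v := by
  obtain ⟨w, hw⟩ := h; exact ⟨w, (e.append_right w).trans hw⟩

lemma wdvd_of_eqv_right {u v v' : List (Fin (n-1))} (e : Eqv v v') (h : wdvd u v) :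
    wdvd u v' := by
  obtain ⟨w, hw⟩ := h; exact ⟨w, hw.trans e⟩

lemma eqv_wdvd {u v : List (Fin (n-1))} (e : Eqv u v) : wdvd u v :=
  wdvd_of_eqv_left e (wdvd_refl v)

lemma wdvd_cons (a : Fin (n-1)) {u v : List (Fin (n-1))} (h : wdvd u v) :
    wdvd (a :: u) (a :: v) := by
  obtain ⟨w, hw⟩ := h; exact ⟨w, hw.cons a⟩

lemma wdvd_cancel {a : Fin (n-1)} {u v : List (Fin (n-1))} (h : wdvd (a :: u) (a :: v)) :
    wdvd u v := by
  obtain ⟨w, hw⟩ := h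
  exact ⟨w, cancel_head (by simpa using hw)⟩

lemma wdvd_append_right (u w : List (Fin (n-1))) : wdvd u (u ++ w) := ⟨w, .rfl⟩

lemma wdvd.length_le {u v : List (Fin (n-1))} (h : wdvd u v) : u.length ≤ v.length := by
  obtain ⟨w, hw⟩ := h
  have := hw.length; simp at this; omega

/-- the atom lcm divides any common multiple -/
lemma atom_lcm {a b : Fin (n-1)} {v : List (Fin (n-1))} (ha : wdvd [a] v) (hb : wdvd [b] v) :
    wdvd (a :: cw a b) v := by
  obtain ⟨p, hp⟩ := ha
  obtain ⟨q, hq⟩ := hb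
  simp only [List.cons_append, List.nil_append] at hp hq
  obtain ⟨R, h1, _⟩ := braidH (p.length + 1) a b p q (hp.trans hq.symm) (Nat.lt_succ_self _)
  exact ⟨R, by
    have : Eqv (a :: p) (a :: (cw a b ++ R)) := h1.cons a
    exact (by simpa using this.symm : Eqv ((a :: cw a b) ++ R) (a :: p)).trans hp⟩

set_option maxHeartbeats 1000000 in
/-- conditional lcm theorem -/
theorem lcm_exists (M : ℕ) : ∀ (v : List (Fin (n-1))), v.length < M →
    ∀ x y, wdvd x v → wdvd y v →
    ∃ h, wdvd x h ∧ wdvd y h ∧ wdvd h v ∧ ∀ w, wdvd x w → wdvd y w → wdvd h w := by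
  induction M with
  | zero => intro v hv; omega
  | succ M IH =>
    intro v hv x y hx hy
    rcases x with _ | ⟨a, x'⟩
    · exact ⟨y, wdvd_nil y, wdvd_refl y, hy, fun w _ h2 => h2⟩
    rcases y with _ | ⟨b, y'⟩
    · exact ⟨a :: x', wdvd_refl _, wdvd_nil _, hx, fun w h1 _ => h1⟩
    rcases eq_or_ne a b with rfl | hne
    · -- common first letter
      obtain ⟨rx, hrx⟩ := hx
      obtain ⟨ry, hry⟩ := hy
      rw [List.cons_append] at hrx hry
      have hyvt : Eqv (y' ++ ry) (x' ++ rx) := cancel_head (hry.trans hrx.symm)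
      have hlen : (x' ++ rx).length < M := by have := hrx.length; simp at this ⊢; omega
      obtain ⟨h', h'x, h'y, h'v, h'u⟩ := IH (x' ++ rx) hlen x' y' ⟨rx, .rfl⟩ ⟨ry, hyvt⟩
      refine ⟨a :: h', wdvd_cons a h'x, wdvd_cons a h'y,
        wdvd_of_eqv_right hrx (wdvd_cons a h'v), ?_⟩
      intro w hw1 hw2
      obtain ⟨r, hr⟩ := hw1
      rw [List.cons_append] at hr
      have c2 : wdvd y' (x' ++ r) := by
        obtain ⟨r', hr'⟩ := hw2
        rw [List.cons_append] at hr'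
        exact ⟨r', cancel_head (hr'.trans hr.symm)⟩
      exact wdvd_of_eqv_right hr (wdvd_cons a (h'u (x' ++ r) ⟨r, .rfl⟩ c2))
    · -- distinct first letters
      obtain ⟨rx, hrx⟩ := hx
      obtain ⟨ry, hry⟩ := hy
      rw [List.cons_append] at hrx hry
      obtain ⟨R, hR1, hR2⟩ := braidH ((x' ++ rx).length + 1) a b (x' ++ rx) (y' ++ ry)
        (hrx.trans hry.symm) (Nat.lt_succ_self _)
      have hv1 : Eqv (a :: (cw a b ++ R)) v := (hR1.cons a).symm.trans hrx
      have hlv1 : (cw a b ++ R).length < M := by have := hv1.length; simp at this ⊢; omega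
      obtain ⟨h₁, h1x, h1c, h1v, h1u⟩ := IH (cw a b ++ R) hlv1 x' (cw a b)
        ⟨rx, hR1⟩ (wdvd_append_right _ R)
      have hmh2 : wdvd (a :: cw a b) (a :: h₁) := wdvd_cons a h1c
      have hxh2 : wdvd (a :: x') (a :: h₁) := wdvd_cons a h1x
      have hh2v : wdvd (a :: h₁) v := wdvd_of_eqv_right hv1 (wdvd_cons a h1v)
      have hu2 : ∀ w, wdvd (a :: x') w → wdvd (a :: cw a b) w → wdvd (a :: h₁) w := by
        intro w hw1 hw2
        obtain ⟨r, hr⟩ := hw1; rw [List.cons_append] at hr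
        have c2 : wdvd (cw a b) (x' ++ r) := by
          obtain ⟨r', hr'⟩ := hw2
          rw [List.cons_append] at hr'
          exact ⟨r', cancel_head (hr'.trans hr.symm)⟩
        exact wdvd_of_eqv_right hr (wdvd_cons a (h1u _ ⟨r, .rfl⟩ c2))
      have hbh2 : wdvd [b] (a :: h₁) := by
        have hbm : wdvd [b] (a :: cw a b) :=
          ⟨cw b a, by simpa using (lcm_word_eqv (a := a) (b := b)).symm⟩
        exact hbm.trans hmh2
      obtain ⟨hh, hhh⟩ := hbh2
      rw [List.cons_append, List.nil_append] at hhh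
      -- hhh : Eqv (b :: hh) (a :: h₁)
      obtain ⟨w₂, hw₂⟩ := hh2v
      have hv2 : Eqv (b :: (hh ++ w₂)) v := by
        have h0 : Eqv ((b :: hh) ++ w₂) ((a :: h₁) ++ w₂) := hhh.append_right w₂
        rw [List.cons_append] at h0
        exact h0.trans hw₂
      have hlvt : (hh ++ w₂).length < M := by have := hv2.length; simp at this ⊢; omega
      have hyvt : wdvd y' (hh ++ w₂) := ⟨ry, cancel_head (hry.trans hv2.symm)⟩
      obtain ⟨h₃, h3h, h3y, h3v, h3u⟩ := IH (hh ++ w₂) hlvt hh y' ⟨w₂, .rfl⟩ hyvt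
      refine ⟨b :: h₃, ?_, wdvd_cons b h3y, wdvd_of_eqv_right hv2 (wdvd_cons b h3v), ?_⟩
      · exact hxh2.trans (wdvd_of_eqv_left hhh.symm (wdvd_cons b h3h))
      · intro w hw1 hw2
        have haw : wdvd [a] w := by
          obtain ⟨r, hr⟩ := hw1; exact ⟨x' ++ r, by simpa using hr⟩
        have hbw : wdvd [b] w := by
          obtain ⟨r, hr⟩ := hw2; exact ⟨y' ++ r, by simpa using hr⟩
        obtain ⟨r, hr⟩ := hu2 w hw1 (atom_lcm haw hbw)
        rw [List.cons_append] at hr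
        have hw' : Eqv (b :: (hh ++ r)) w := by
          have h0 : Eqv ((b :: hh) ++ r) ((a :: h₁) ++ r) := hhh.append_right r
          rw [List.cons_append] at h0
          exact h0.trans hr
        have c2 : wdvd y' (hh ++ r) := by
          obtain ⟨r', hr'⟩ := hw2; rw [List.cons_append] at hr'
          exact ⟨r', cancel_head (hr'.trans hw'.symm)⟩
        exact wdvd_of_eqv_right hw' (wdvd_cons b (h3u _ ⟨r, .rfl⟩ c2))

/-- the word `σ_0 σ_1 ⋯ σ_{m-1}` (truncated to existing letters) -/
def Cword (m : ℕ) : List (Fin (n-1)) :=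
  (List.range m).filterMap (fun i => if h : i < n - 1 then some ⟨i, h⟩ else none)

/-- the word for `Δ_m` -/
def Dword : ℕ → List (Fin (n-1))
  | 0 => []
  | m + 1 => Cword m ++ Dword m

/-- the word `σ_{m-1} ⋯ σ_1 σ_0` -/
def dwordr (m : ℕ) : List (Fin (n-1)) := (Cword (n := n) m).reverse

lemma Cword_zero : Cword (n := n) 0 = [] := rfl

lemma Cword_succ (m : ℕ) :
    Cword (n := n) (m+1) = Cword m ++ (if h : m < n - 1 then [⟨m, h⟩] else []) := by
  unfold Cword
  rw [List.range_succ, List.filterMap_append]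
  congr 1
  split <;> simp_all

lemma Cword_mem {m : ℕ} {i : Fin (n-1)} (h : i ∈ Cword (n := n) m) : (i : ℕ) < m := by
  unfold Cword at h
  obtain ⟨j, hj, hji⟩ := List.mem_filterMap.1 h
  split at hji
  · cases hji; simpa using List.mem_range.1 hj
  · cases hji

lemma Dword_mem : ∀ {m : ℕ} {i : Fin (n-1)}, i ∈ Dword (n := n) m → (i : ℕ) + 2 ≤ m := by
  intro m
  induction m with
  | zero => intro i h; cases h
  | succ m ih =>
    intro i h
    rw [Dword, List.mem_append] at h
    rcases h with h | h
    · have := Cword_mem h; omega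
    · have := ih h; omega

/-- slide a letter past a word all of whose letters are far from it -/
lemma far_slide {i : Fin (n-1)} : ∀ {w : List (Fin (n-1))}, (∀ j ∈ w, far i j) →
    Eqv (i :: w) (w ++ [i]) := by
  intro w
  induction w with
  | nil => intro _; exact .rfl
  | cons a w ih =>
    intro h
    exact (swap_head (h a (by simp)) w).trans
      ((ih (fun j hj => h j (by simp [hj]))).cons a)

/-- the slide identity `σ_{i+1} C_m ≡ C_m σ_i` for `i+2 ≤ m` -/
lemma slideA : ∀ (m : ℕ) (i i1 : Fin (n-1)), (i1 : ℕ) = (i : ℕ) + 1 → (i : ℕ) + 2 ≤ m →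
    Eqv (i1 :: Cword (n := n) m) (Cword (n := n) m ++ [i]) := by
  intro m
  induction m with
  | zero => intro i i1 h1 h2; omega
  | succ m ih =>
    intro i i1 h1 h2
    rcases Nat.lt_or_ge ((i : ℕ) + 2) (m + 1) with hlt | hge
    · -- i + 2 ≤ m : use ih and slide past the last letter
      rw [Cword_succ]
      split
      · rename_i hmn
        refine ((ih i i1 h1 (by omega)).append_right _).trans ?_
        rw [List.append_assoc, List.append_assoc]
        refine Eqv.append_left _ ?_
        exact swap_head (.inl (by simp; omega)) []
      · rw [List.append_nil]
        exact ih i i1 h1 (by omega)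
    · -- base case : m = i + 1
      have hm : m = (i : ℕ) + 1 := by omega
      subst hm
      have hi1n : ((i : ℕ) + 1) < n - 1 := by rw [← h1]; exact i1.isLt
      have hin : (i : ℕ) < n - 1 := i.isLt
      have hone : (⟨(i : ℕ) + 1, hi1n⟩ : Fin (n-1)) = i1 := by apply Fin.ext; simp [h1]
      have heqi : (⟨(i : ℕ), hin⟩ : Fin (n-1)) = i := Fin.ext rfl
      have hC2 : Cword (n := n) ((i : ℕ) + 1 + 1) = Cword (n := n) i ++ [i, i1] := by
        rw [Cword_succ, Cword_succ, dif_pos hin, dif_pos hi1n, hone, heqi]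
        simp
      rw [hC2]
      have hfar : ∀ j ∈ Cword (n := n) i, far i1 j := fun j hj =>
        .inr (by have := Cword_mem hj; omega)
      have hadj : adj i1 i := .inr h1.symm
      refine Eqv.trans (v := Cword (n := n) i ++ [i1, i, i1]) ?_ ?_
      · have := (far_slide hfar).append_right [i, i1]
        simpa using this
      · have := (braid_head hadj []).append_left (Cword (n := n) i)
        simpa using this

lemma eqv_of_eq {u v : List (Fin (n-1))} (h : u = v) : Eqv u v := by subst h; exact .rfl

lemma dwordr_succ (m : ℕ) :
    dwordr (n := n) (m+1) = (if h : m < n - 1 then [(⟨m, h⟩ : Fin (n-1))] else []) ++ dwordr m := by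
  unfold dwordr
  rw [Cword_succ, List.reverse_append]
  congr 1
  split <;> simp

lemma dwordr_mem {m : ℕ} {i : Fin (n-1)} (h : i ∈ dwordr (n := n) m) : (i : ℕ) < m := by
  unfold dwordr at h
  exact Cword_mem (List.mem_reverse.1 h)

/-- `Δ_{m+1} ≡ Δ_m ⋅ (σ_{m-1} ⋯ σ_0)` -/
lemma deltaW : ∀ m : ℕ, Eqv (Dword (n := n) (m+1)) (Dword (n := n) m ++ dwordr m) := by
  intro m
  induction m with
  | zero => exact .rfl
  | succ m ih =>
    have hD : Dword (n := n) (m+2) = Cword (m+1) ++ Dword (m+1) := rfl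
    by_cases hmn : m < n - 1
    · have hC : Cword (n := n) (m+1) = Cword m ++ [⟨m, hmn⟩] := by
        rw [Cword_succ, dif_pos hmn]
      have hd : dwordr (n := n) (m+1) = ⟨m, hmn⟩ :: dwordr m := by
        rw [dwordr_succ, dif_pos hmn]; rfl
      have hslide : Eqv ((⟨m, hmn⟩ : Fin (n-1)) :: Dword (n := n) m)
          (Dword (n := n) m ++ [⟨m, hmn⟩]) :=
        far_slide (fun j hj => .inr (by have := Dword_mem hj; simp; omega))
      refine Eqv.trans (v := (Cword m ++ [⟨m, hmn⟩]) ++ (Dword (n := n) m ++ dwordr m)) ?_ ?_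
      · rw [hD, hC]; exact ih.append_left _
      refine Eqv.trans (v := Cword (n := n) m ++ (((⟨m, hmn⟩ : Fin (n-1)) :: Dword (n := n) m) ++ dwordr m)) (eqv_of_eq (by simp)) ?_
      refine Eqv.trans ((hslide.append_right _).append_left _) ?_
      refine eqv_of_eq ?_
      rw [hd]
      show _ = (Cword (n := n) m ++ Dword (n := n) m) ++ _
      simp
    · have hC : Cword (n := n) (m+1) = Cword m := by
        rw [Cword_succ, dif_neg hmn]; simp
      have hd : dwordr (n := n) (m+1) = dwordr m := by
        rw [dwordr_succ, dif_neg hmn]; rfl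
      refine Eqv.trans (v := Cword (n := n) m ++ (Dword (n := n) m ++ dwordr m)) ?_ ?_
      · rw [hD, hC]; exact ih.append_left _
      refine eqv_of_eq ?_
      rw [hd]
      show _ = (Cword (n := n) m ++ Dword (n := n) m) ++ _
      simp

/-- slide identity for the decreasing word -/
lemma dslide : ∀ (m : ℕ) (k k1 : Fin (n-1)), (k1 : ℕ) = (k : ℕ) + 1 → (k1 : ℕ) + 1 ≤ m →
    Eqv (k :: dwordr (n := n) m) (dwordr (n := n) m ++ [k1]) := by
  intro m
  induction m with
  | zero => intro k k1 h1 h2; omega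
  | succ m ih =>
    intro k k1 h1 h2
    rcases Nat.lt_or_ge ((k1 : ℕ) + 1) (m + 1) with hlt | hge
    · rw [dwordr_succ]
      split
      · rename_i hmn
        refine Eqv.trans (v := (⟨m, hmn⟩ : Fin (n-1)) :: k :: dwordr (n := n) m)
          (swap_head (.inl (by simp; omega)) _) ?_
        refine Eqv.trans ((ih k k1 h1 (by omega)).cons _) (eqv_of_eq (by simp))
      · rw [List.nil_append]
        exact ih k k1 h1 (by omega)
    · -- k1 = m
      have hk1m : (k1 : ℕ) = m := by omega
      have hmn : m < n - 1 := hk1m ▸ k1.isLt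
      have hkn : (k : ℕ) < n - 1 := k.isLt
      have hk1 : k1 = ⟨m, hmn⟩ := Fin.ext (by simpa using hk1m)
      have hd1 : dwordr (n := n) (m+1) = k1 :: dwordr m := by
        rw [dwordr_succ, dif_pos hmn, hk1]
        rfl
      have hm : m = (k : ℕ) + 1 := by omega
      have hd2 : dwordr (n := n) m = k :: dwordr ((k : ℕ)) := by
        rw [hm, dwordr_succ, dif_pos hkn]
        rfl
      rw [hd1, hd2]
      have hadj : adj k k1 := .inl h1.symm
      refine Eqv.trans (braid_head hadj _) ?_
      have hfar : ∀ j ∈ dwordr (n := n) ((k : ℕ)), far k1 j := fun j hj =>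
        .inr (by have := dwordr_mem hj; omega)
      have h3 := ((far_slide hfar).append_left [k1, k])
      refine Eqv.trans (v := k1 :: k :: (dwordr (n := n) ((k : ℕ)) ++ [k1]))
        (by simpa using h3) (eqv_of_eq (by simp))

/-- conjugation by Δ sends `σ_i` to `σ_{m-2-i}` -/
lemma delta_conj : ∀ (m : ℕ), m ≤ n → ∀ (i i' : Fin (n-1)), (i : ℕ) + 2 ≤ m →
    (i' : ℕ) + 2 + (i : ℕ) = m →
    Eqv (i :: Dword (n := n) m) (Dword (n := n) m ++ [i']) := by
  intro m
  induction m with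
  | zero => intro _ i i' h1 h2; omega
  | succ m ih =>
    intro hmn i i' h1 h2
    rcases Nat.eq_zero_or_pos (i : ℕ) with hi0 | hipos
    · -- i = 0
      rcases Nat.lt_or_ge m 2 with hm2 | hm2
      · have hm1 : m = 1 := by omega
        subst hm1
        have h0n : 0 < n - 1 := by have := i.isLt; omega
        have hC1 : Cword (n := n) 1 = [⟨0, h0n⟩] := by
          have hcs := Cword_succ (n := n) 0
          rw [dif_pos h0n] at hcs
          simpa [Cword_zero] using hcs
        have hD : Dword (n := n) 2 = [⟨0, h0n⟩] := by
          show Cword (n := n) 1 ++ Dword (n := n) 1 = _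
          rw [hC1]
          rfl
        have hieq : i = ⟨0, h0n⟩ := Fin.ext (by simpa using hi0)
        have hieq' : i' = ⟨0, h0n⟩ := Fin.ext (by simp; omega)
        rw [hD, hieq, hieq']
        exact .rfl
      · -- m ≥ 2
        have hi2n : m - 2 < n - 1 := by omega
        set i2 : Fin (n-1) := ⟨m - 2, hi2n⟩ with hi2
        refine Eqv.trans ((deltaW m).cons i) ?_
        refine Eqv.trans (v := (i :: Dword (n := n) m) ++ dwordr m) (eqv_of_eq (by simp)) ?_
        refine Eqv.trans ((ih (by omega) i i2 (by omega)
          (show (m - 2) + 2 + (i : ℕ) = m by omega)).append_right _) ?_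
        refine Eqv.trans (v := Dword (n := n) m ++ (i2 :: dwordr m)) (eqv_of_eq (by simp)) ?_
        refine Eqv.trans ((dslide m i2 i' (show (i' : ℕ) = (m - 2) + 1 by omega)
          (by omega)).append_left (Dword (n := n) m)) ?_
        refine Eqv.trans (v := (Dword (n := n) m ++ dwordr m) ++ [i']) (eqv_of_eq (by simp)) ?_
        exact (deltaW m).symm.append_right [i']
    · -- i ≥ 1
      have hi0n : (i : ℕ) - 1 < n - 1 := by have := i.isLt; omega
      set i0 : Fin (n-1) := ⟨(i : ℕ) - 1, hi0n⟩ with hi0def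
      have hDs : Dword (n := n) (m+1) = Cword m ++ Dword m := rfl
      rw [hDs]
      refine Eqv.trans (v := (i :: Cword (n := n) m) ++ Dword (n := n) m)
        (eqv_of_eq (by simp)) ?_
      refine Eqv.trans ((slideA m i0 i (show (i : ℕ) = (i : ℕ) - 1 + 1 by omega)
        (show (i : ℕ) - 1 + 2 ≤ m by omega)).append_right _) ?_
      refine Eqv.trans (v := Cword (n := n) m ++ (i0 :: Dword (n := n) m))
        (eqv_of_eq (by simp)) ?_
      refine Eqv.trans ((ih (by omega) i0 i'
        (show (i : ℕ) - 1 + 2 ≤ m by omega)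
        (show (i' : ℕ) + 2 + ((i : ℕ) - 1) = m by omega)).append_left (Cword (n := n) m)) ?_
      exact eqv_of_eq (by simp)

/-- the flip map on letters and words -/
def tw : List (Fin (n-1)) → List (Fin (n-1)) := List.map Fin.rev

lemma tw_append (u v : List (Fin (n-1))) : tw (u ++ v) = tw u ++ tw v := List.map_append
lemma tw_cons (a : Fin (n-1)) (u : List (Fin (n-1))) : tw (a :: u) = Fin.rev a :: tw u := rfl
lemma tw_tw (u : List (Fin (n-1))) : tw (tw u) = u := by
  simp [tw, List.map_map, Function.comp_def]

lemma rev_val (i : Fin (n-1)) : (Fin.rev i : ℕ) = n - 1 - ((i : ℕ) + 1) := Fin.val_rev i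

lemma far_rev {i j : Fin (n-1)} (h : far i j) : far (Fin.rev i) (Fin.rev j) := by
  have hi := i.isLt; have hj := j.isLt
  have h1 := rev_val i; have h2 := rev_val j
  rcases h with h | h
  · exact .inr (by omega)
  · exact .inl (by omega)

lemma adj_rev {i j : Fin (n-1)} (h : adj i j) : adj (Fin.rev i) (Fin.rev j) := by
  have hi := i.isLt; have hj := j.isLt
  have h1 := rev_val i; have h2 := rev_val j
  rcases h with h | h
  · exact .inr (by omega)
  · exact .inl (by omega)

lemma BStep.tau {u v : List (Fin (n-1))} (h : BStep u v) : BStep (tw u) (tw v) := by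
  cases h with
  | swap x y h =>
      have := BStep.swap (tw x) (tw y) (far_rev h)
      simpa [tw_append, tw_cons] using this
  | braid x y h =>
      have := BStep.braid (tw x) (tw y) (adj_rev h)
      simpa [tw_append, tw_cons] using this

lemma Eqv.tau {u v : List (Fin (n-1))} (h : Eqv u v) : Eqv (tw u) (tw v) := by
  induction h with
  | refl => exact .rfl
  | tail h₁ h₂ ih => exact ih.trans h₂.tau.eqv

lemma delta_conj_letter (i : Fin (n-1)) :
    Eqv (i :: Dword (n := n) n) (Dword (n := n) n ++ [Fin.rev i]) := by
  have hi := i.isLt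
  have h1 := rev_val i
  exact delta_conj n le_rfl i (Fin.rev i) (by omega) (by omega)

lemma delta_conj_word : ∀ w : List (Fin (n-1)),
    Eqv (w ++ Dword (n := n) n) (Dword (n := n) n ++ tw w) := by
  intro w
  induction w with
  | nil => exact eqv_of_eq (by simp [tw])
  | cons i w ih =>
    refine Eqv.trans (v := i :: (Dword (n := n) n ++ tw w)) (ih.cons i) ?_
    refine Eqv.trans (v := (i :: Dword (n := n) n) ++ tw w) (eqv_of_eq (by simp)) ?_
    refine Eqv.trans ((delta_conj_letter i).append_right (tw w)) ?_
    exact eqv_of_eq (by simp [tw_cons])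

lemma tauD : Eqv (tw (Dword (n := n) n)) (Dword (n := n) n) :=
  (cancel_word (delta_conj_word (Dword (n := n) n))).symm

/-- powers of Δ -/
def Dpow : ℕ → List (Fin (n-1))
  | 0 => []
  | k+1 => Dword (n := n) n ++ Dpow k

lemma tpow_eqv (k : ℕ) {u v : List (Fin (n-1))} (h : Eqv u v) : Eqv (tw^[k] u) (tw^[k] v) := by
  induction k generalizing u v with
  | zero => simpa using h
  | succ k ih =>
      rw [Function.iterate_succ_apply, Function.iterate_succ_apply]
      exact ih h.tau

lemma tpow_append (k : ℕ) (u v : List (Fin (n-1))) :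
    tw^[k] (u ++ v) = tw^[k] u ++ tw^[k] v := by
  induction k generalizing u v with
  | zero => simp
  | succ k ih =>
      rw [Function.iterate_succ_apply, Function.iterate_succ_apply,
        Function.iterate_succ_apply, tw_append, ih]

lemma tpowD (k : ℕ) : Eqv (tw^[k] (Dword (n := n) n)) (Dword (n := n) n) := by
  induction k with
  | zero => exact .rfl
  | succ k ih =>
      rw [Function.iterate_succ_apply]
      exact (tpow_eqv k tauD).trans ih

lemma delta_conj_pow : ∀ (k : ℕ) (w : List (Fin (n-1))),
    Eqv (w ++ Dpow (n := n) k) (Dpow (n := n) k ++ tw^[k] w) := by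
  intro k
  induction k with
  | zero => intro w; exact eqv_of_eq (by simp [Dpow])
  | succ k ih =>
    intro w
    show Eqv (w ++ (Dword (n := n) n ++ Dpow k)) ((Dword (n := n) n ++ Dpow k) ++ tw^[k+1] w)
    refine Eqv.trans (v := (w ++ Dword (n := n) n) ++ Dpow k) (eqv_of_eq (by simp)) ?_
    refine Eqv.trans ((delta_conj_word w).append_right _) ?_
    refine Eqv.trans (v := Dword (n := n) n ++ (tw w ++ Dpow k)) (eqv_of_eq (by simp)) ?_
    refine Eqv.trans ((ih (tw w)).append_left _) ?_
    rw [Function.iterate_succ_apply]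
    exact eqv_of_eq (by simp)

lemma Cword_head : ∀ (m : ℕ), 1 ≤ m → ∀ (h0 : 0 < n - 1),
    ∃ t, Cword (n := n) m = ⟨0, h0⟩ :: t := by
  intro m
  induction m with
  | zero => omega
  | succ m ih =>
    intro _ h0
    rcases Nat.eq_zero_or_pos m with rfl | hm
    · refine ⟨[], ?_⟩
      have hcs := Cword_succ (n := n) 0
      rw [dif_pos h0] at hcs
      simpa [Cword_zero] using hcs
    · obtain ⟨t, ht⟩ := ih hm h0
      rw [Cword_succ, ht]
      exact ⟨t ++ _, rfl⟩

lemma sigma_dvd : ∀ (m : ℕ) (i : Fin (n-1)), (i : ℕ) + 2 ≤ m →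
    wdvd [i] (Dword (n := n) m) := by
  intro m
  induction m with
  | zero => intro i h; omega
  | succ m ih =>
    intro i h
    rcases Nat.eq_zero_or_pos (i : ℕ) with hi0 | hipos
    · have h0 : 0 < n - 1 := by have := i.isLt; omega
      obtain ⟨t, ht⟩ := Cword_head m (by omega) h0
      have hieq : i = ⟨0, h0⟩ := Fin.ext (by simpa using hi0)
      refine ⟨t ++ Dword (n := n) m, eqv_of_eq ?_⟩
      show i :: (t ++ Dword (n := n) m) = Cword (n := n) m ++ Dword (n := n) m
      rw [ht, hieq]
      rfl
    · have hi0n : (i : ℕ) - 1 < n - 1 := by have := i.isLt; omega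
      set i0 : Fin (n-1) := ⟨(i : ℕ) - 1, hi0n⟩ with hi0def
      obtain ⟨w, hw⟩ := ih i0 (show (i : ℕ) - 1 + 2 ≤ m by omega)
      refine ⟨Cword (n := n) m ++ w, ?_⟩
      show Eqv (i :: (Cword (n := n) m ++ w)) (Cword (n := n) m ++ Dword (n := n) m)
      refine Eqv.trans (v := (i :: Cword (n := n) m) ++ w) (eqv_of_eq (by simp)) ?_
      refine Eqv.trans ((slideA m i0 i (show (i : ℕ) = (i : ℕ) - 1 + 1 by omega)
        (show (i : ℕ) - 1 + 2 ≤ m by omega)).append_right w) ?_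
      refine Eqv.trans (v := Cword (n := n) m ++ (i0 :: w)) (eqv_of_eq (by simp)) ?_
      exact Eqv.append_left _ (by simpa using hw)

lemma sigma_dvd_delta (i : Fin (n-1)) : wdvd [i] (Dword (n := n) n) :=
  sigma_dvd n i (by have := i.isLt; omega)

/-- a right divisor of Δ is a left divisor -/
lemma rdvd_flip {u w : List (Fin (n-1))} (h : Eqv (u ++ w) (Dword (n := n) n)) :
    wdvd w (Dword (n := n) n) := by
  have h1 : Eqv (tw u ++ tw w) (Dword (n := n) n) := by
    refine Eqv.trans (eqv_of_eq (tw_append u w).symm) (h.tau.trans tauD)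
  have key : Eqv ((w ++ tw u) ++ tw w) (Dword (n := n) n ++ tw w) := by
    refine Eqv.trans (v := w ++ (tw u ++ tw w)) (eqv_of_eq (by simp)) ?_
    refine Eqv.trans (h1.append_left w) (delta_conj_word w)
  exact ⟨tw u, cancel_word_right key⟩

/-- a factor of Δ is a (left) divisor of Δ -/
lemma mid_dvd_delta {x e w : List (Fin (n-1))} (h : Eqv (x ++ (e ++ w)) (Dword (n := n) n)) :
    wdvd e (Dword (n := n) n) :=
  (wdvd_append_right e w).trans (rdvd_flip h)

lemma Dpow_add (j m : ℕ) : Dpow (n := n) (j + m) = Dpow j ++ Dpow m := by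
  induction j with
  | zero => simp [Dpow, Nat.zero_add]
  | succ j ih =>
    rw [show j + 1 + m = (j + m) + 1 by omega]
    show Dword (n := n) n ++ Dpow (j + m) = (Dword (n := n) n ++ Dpow j) ++ Dpow m
    rw [ih, List.append_assoc]

lemma Dpow_succ_right (k : ℕ) :
    Dpow (n := n) (k+1) = Dpow (n := n) k ++ Dword (n := n) n := by
  rw [Dpow_add k 1]
  simp [Dpow]

/-- every word divides a power of Δ -/
lemma wdvd_Dpow : ∀ w : List (Fin (n-1)), wdvd w (Dpow (n := n) (w.length)) := by
  intro w
  induction w using List.reverseRecOn with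
  | nil => exact wdvd_refl []
  | append_singleton w i ih =>
    obtain ⟨r, hr⟩ := ih
    obtain ⟨s, hs⟩ := sigma_dvd_delta (n := n) i
    have e : Eqv ((w ++ [i]) ++ (s ++ tw r)) (Dpow (n := n) (w.length + 1)) := by
      refine Eqv.trans (v := w ++ ((i :: s) ++ tw r)) (eqv_of_eq (by simp)) ?_
      refine Eqv.trans (((by simpa using hs : Eqv (i :: s) (Dword (n := n) n)).append_right
        (tw r)).append_left w) ?_
      refine Eqv.trans ((delta_conj_word r).symm.append_left w) ?_
      refine Eqv.trans (v := (w ++ r) ++ Dword (n := n) n) (eqv_of_eq (by simp)) ?_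
      refine Eqv.trans (hr.append_right _) (eqv_of_eq (Dpow_succ_right _).symm)
    have hlen : (w ++ [i]).length = w.length + 1 := by simp
    rw [hlen]
    exact ⟨_, e⟩

lemma wdvd_Dpow_ge {w : List (Fin (n-1))} {k : ℕ} (hk : w.length ≤ k) :
    wdvd w (Dpow (n := n) k) := by
  obtain ⟨m, rfl⟩ := Nat.exists_eq_add_of_le hk
  rw [Dpow_add]
  exact (wdvd_Dpow w).trans (wdvd_append_right _ _)

/-- evaluation of a positive word in the braid group -/
def evalPos (w : List (Fin (n-1))) : BraidGroup n := (w.map braidGen).prod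

lemma evalPos_nil : evalPos (n := n) [] = 1 := rfl
lemma evalPos_cons (i : Fin (n-1)) (w : List (Fin (n-1))) :
    evalPos (i :: w) = braidGen i * evalPos w := by simp [evalPos]
lemma evalPos_append (u v : List (Fin (n-1))) :
    evalPos (u ++ v) = evalPos u * evalPos v := by simp [evalPos]

lemma braid_rel_of_mem {r : FreeGroup (Fin (n-1))} (hr : r ∈ braidRels n) :
    PresentedGroup.mk (braidRels n) r = 1 := by
  have : r ∈ Subgroup.normalClosure (braidRels n) := Subgroup.subset_normalClosure hr
  exact (QuotientGroup.eq_one_iff r).2 this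

lemma braid_comm {i j : Fin (n-1)} (h : far i j) :
    braidGen (n := n) i * braidGen j = braidGen j * braidGen i := by
  have key : ∀ (a b : Fin (n-1)), (a : ℕ) + 2 ≤ (b : ℕ) →
      braidGen (n := n) a * braidGen b = braidGen b * braidGen a := by
    intro a b hab
    have hmem : (FreeGroup.of a * FreeGroup.of b * (FreeGroup.of b * FreeGroup.of a)⁻¹)
        ∈ braidRels n := .inl ⟨a, b, hab, rfl⟩
    have := braid_rel_of_mem hmem
    rw [map_mul, map_mul, map_inv, map_mul] at this
    have h2 := mul_eq_one_iff_eq_inv.1 this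
    rw [inv_inv] at h2
    exact h2
  rcases h with h | h
  · exact key i j h
  · exact (key j i h).symm

lemma braid_braid {i j : Fin (n-1)} (h : adj i j) :
    braidGen (n := n) i * braidGen j * braidGen i =
      braidGen j * braidGen i * braidGen j := by
  have key : ∀ (a b : Fin (n-1)), (a : ℕ) + 1 = (b : ℕ) →
      braidGen (n := n) a * braidGen b * braidGen a =
        braidGen b * braidGen a * braidGen b := by
    intro a b hab
    have hmem : (FreeGroup.of a * FreeGroup.of b * FreeGroup.of a *
        (FreeGroup.of b * FreeGroup.of a * FreeGroup.of b)⁻¹) ∈ braidRels n :=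
      .inr ⟨a, b, hab, rfl⟩
    have := braid_rel_of_mem hmem
    rw [map_mul, map_mul, map_mul, map_inv, map_mul, map_mul] at this
    have h2 := mul_eq_one_iff_eq_inv.1 this
    rw [inv_inv] at h2
    exact h2
  rcases h with h | h
  · exact key i j h
  · exact (key j i h).symm

lemma evalPos_step {u v : List (Fin (n-1))} (h : BStep u v) : evalPos u = evalPos v := by
  cases h with
  | swap x y h =>
      have e : braidGen ‹Fin (n-1)› * (braidGen ‹_› * evalPos y) = _ := rfl
      clear e
      rename_i i j
      have e : braidGen i * (braidGen j * evalPos y)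
          = braidGen j * (braidGen i * evalPos y) := by
        rw [← mul_assoc, ← mul_assoc, braid_comm h]
      rw [evalPos_append, evalPos_append, evalPos_cons, evalPos_cons,
        evalPos_cons, evalPos_cons, e]
  | braid x y h =>
      rename_i i j
      have e : braidGen i * (braidGen j * (braidGen i * evalPos y))
          = braidGen j * (braidGen i * (braidGen j * evalPos y)) := by
        rw [← mul_assoc, ← mul_assoc, ← mul_assoc, ← mul_assoc, braid_braid h]
      rw [evalPos_append, evalPos_append, evalPos_cons, evalPos_cons, evalPos_cons,
        evalPos_cons, evalPos_cons, evalPos_cons, e]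

lemma evalPos_eqv {u v : List (Fin (n-1))} (h : Eqv u v) : evalPos u = evalPos v := by
  induction h with
  | refl => rfl
  | tail h₁ h₂ ih => exact ih.trans (evalPos_step h₂)

/-! ### The group of fractions -/

/-- underlying relation for the group of fractions `x Δ^{-k}` -/
def frel (p q : List (Fin (n-1)) × ℕ) : Prop :=
  Eqv (p.1 ++ Dpow (n := n) q.2) (q.1 ++ Dpow (n := n) p.2)

lemma frel_refl (p : List (Fin (n-1)) × ℕ) : frel p p := .rfl

lemma frel_symm {p q : List (Fin (n-1)) × ℕ} (h : frel p q) : frel q p := h.symm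

lemma dcomm (a b : ℕ) : Dpow (n := n) a ++ Dpow b = Dpow b ++ Dpow a := by
  rw [← Dpow_add, ← Dpow_add, Nat.add_comm]

lemma frel_trans {p q r : List (Fin (n-1)) × ℕ} (h : frel p q) (h' : frel q r) : frel p r := by
  have key : Eqv ((p.1 ++ Dpow (n := n) r.2) ++ Dpow (n := n) q.2)
      ((r.1 ++ Dpow (n := n) p.2) ++ Dpow (n := n) q.2) := by
    refine Eqv.trans (v := (p.1 ++ Dpow (n := n) q.2) ++ Dpow (n := n) r.2)
      (eqv_of_eq (by rw [List.append_assoc, List.append_assoc, dcomm])) ?_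
    refine Eqv.trans (h.append_right _) ?_
    refine Eqv.trans (v := (q.1 ++ Dpow (n := n) r.2) ++ Dpow (n := n) p.2)
      (eqv_of_eq (by rw [List.append_assoc, List.append_assoc, dcomm])) ?_
    refine Eqv.trans (h'.append_right _) ?_
    exact eqv_of_eq (by rw [List.append_assoc, List.append_assoc, dcomm])
  exact cancel_word_right key

instance fsetoid : Setoid (List (Fin (n-1)) × ℕ) :=
  ⟨frel, frel_refl, frel_symm, frel_trans⟩

/-- the group of fractions -/
abbrev GrpF (n : ℕ) : Type := Quotient (fsetoid (n := n))

/-- constructor -/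
def GrpF.mk (p : List (Fin (n-1)) × ℕ) : GrpF n := Quotient.mk (fsetoid (n := n)) p

lemma tpow_nil (k : ℕ) : tw^[k] ([] : List (Fin (n-1))) = [] := by
  induction k with
  | zero => rfl
  | succ k ih => rw [Function.iterate_succ_apply, show tw ([] : List (Fin (n-1))) = [] from rfl, ih]

lemma tpow_tpow (k : ℕ) (x : List (Fin (n-1))) : tw^[k] (tw^[k] x) = x := by
  induction k generalizing x with
  | zero => rfl
  | succ k ih =>
    rw [Function.iterate_succ_apply' (f := tw) (n := k) (x := x),
      Function.iterate_succ_apply (f := tw), tw_tw]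
    exact ih x

lemma tpowDpow (k m : ℕ) : Eqv (tw^[k] (Dpow (n := n) m)) (Dpow (n := n) m) := by
  induction m with
  | zero => rw [show Dpow (n := n) 0 = [] from rfl, tpow_nil]
  | succ m ih =>
    rw [show Dpow (n := n) (m+1) = Dword (n := n) n ++ Dpow m from rfl, tpow_append]
    exact (tpowD k).append (ih)

lemma fmul_wd : ∀ (p₁ p₂ q₁ q₂ : List (Fin (n-1)) × ℕ), frel p₁ q₁ → frel p₂ q₂ →
    frel (n := n) (p₁.1 ++ tw^[p₁.2] p₂.1, p₁.2 + p₂.2) (q₁.1 ++ tw^[q₁.2] q₂.1, q₁.2 + q₂.2) := by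
  rintro ⟨u, k⟩ ⟨v, l⟩ ⟨u', k'⟩ ⟨v', l'⟩ h1 h2
  show Eqv ((u ++ tw^[k] v) ++ Dpow (n := n) (k' + l')) ((u' ++ tw^[k'] v') ++ Dpow (k + l))
  refine Eqv.trans (v := u ++ ((tw^[k] v ++ Dpow (n := n) l') ++ Dpow (n := n) k'))
    (eqv_of_eq (by rw [show Dpow (n := n) (k'+l') = Dpow l' ++ Dpow k' by
      rw [← Dpow_add, Nat.add_comm]]; simp [List.append_assoc])) ?_
  refine Eqv.trans ((((tpowDpow k l').symm.append_left (tw^[k] v)).append_right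
    (Dpow (n := n) k')).append_left u) ?_
  refine Eqv.trans (v := u ++ (tw^[k] (v ++ Dpow (n := n) l') ++ Dpow (n := n) k'))
    (eqv_of_eq (by rw [tpow_append])) ?_
  refine Eqv.trans ((((tpow_eqv k h2).append_right (Dpow (n := n) k')).append_left u)) ?_
  refine Eqv.trans (v := u ++ ((tw^[k] v' ++ tw^[k] (Dpow (n := n) l)) ++ Dpow (n := n) k'))
    (eqv_of_eq (by rw [tpow_append])) ?_
  refine Eqv.trans ((((tpowDpow k l).append_left (tw^[k] v')).append_right
    (Dpow (n := n) k')).append_left u) ?_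
  refine Eqv.trans (v := u ++ ((tw^[k] v' ++ Dpow (n := n) k') ++ Dpow (n := n) l))
    (eqv_of_eq (by rw [List.append_assoc, List.append_assoc, dcomm])) ?_
  refine Eqv.trans (((delta_conj_pow k' (tw^[k] v')).append_right
    (Dpow (n := n) l)).append_left u) ?_
  refine Eqv.trans (v := ((u ++ Dpow (n := n) k') ++ tw^[k'] (tw^[k] v')) ++ Dpow (n := n) l)
    (eqv_of_eq (by simp [List.append_assoc])) ?_
  refine Eqv.trans (((h1.append_right (tw^[k'] (tw^[k] v'))).append_right
    (Dpow (n := n) l))) ?_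
  refine Eqv.trans (v := u' ++ ((Dpow (n := n) k ++ tw^[k] (tw^[k'] v')) ++ Dpow (n := n) l))
    (eqv_of_eq (by rw [← Function.iterate_add_apply, ← Function.iterate_add_apply,
      Nat.add_comm]; simp [List.append_assoc])) ?_
  refine Eqv.trans ((((delta_conj_pow k (tw^[k'] v')).symm).append_right
    (Dpow (n := n) l)).append_left u') ?_
  exact eqv_of_eq (by rw [Dpow_add]; simp [List.append_assoc])

instance : One (GrpF n) := ⟨(⟦([], 0)⟧ : GrpF n)⟩
instance : Mul (GrpF n) :=
  ⟨Quotient.map₂ (fun p q => (p.1 ++ tw^[p.2] q.1, p.2 + q.2))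
    (fun _ _ h _ _ h' => fmul_wd _ _ _ _ h h')⟩

lemma GrpF.mk_mul (p q : List (Fin (n-1)) × ℕ) :
    (⟦p⟧ : GrpF n) * ⟦q⟧ = (⟦(p.1 ++ tw^[p.2] q.1, p.2 + q.2)⟧ : GrpF n) := rfl

instance : Monoid (GrpF n) where
  mul_assoc a b c := by
    refine Quotient.inductionOn₃ a b c ?_
    rintro ⟨u, k⟩ ⟨v, l⟩ ⟨w, m⟩
    rw [GrpF.mk_mul, GrpF.mk_mul, GrpF.mk_mul, GrpF.mk_mul]
    refine congrArg _ (Prod.ext ?_ ?_)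
    · show (u ++ tw^[k] v) ++ tw^[k+l] w = u ++ tw^[k] (v ++ tw^[l] w)
      rw [tpow_append, Function.iterate_add_apply, List.append_assoc]
    · show (k + l) + m = k + (l + m); omega
  one_mul a := by
    refine Quotient.inductionOn a ?_
    rintro ⟨u, k⟩
    show (⟦(([] : List (Fin (n-1))) ++ tw^[0] u, 0 + k)⟧ : GrpF n) = ⟦(u, k)⟧
    refine congrArg _ (Prod.ext ?_ ?_)
    · show tw^[0] u = u; rfl
    · show 0 + k = k; omega
  mul_one a := by
    refine Quotient.inductionOn a ?_
    rintro ⟨u, k⟩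
    rw [show (1 : GrpF n) = (⟦([], 0)⟧ : GrpF n) from rfl, GrpF.mk_mul]
    refine congrArg _ (Prod.ext ?_ ?_)
    · show u ++ tw^[k] [] = u; rw [tpow_nil]; simp
    · rfl

lemma GrpF.exists_right_inv (g : GrpF n) : ∃ h, g * h = 1 := by
  refine Quotient.inductionOn g ?_
  rintro ⟨u, k⟩
  obtain ⟨ub, hub⟩ := wdvd_Dpow_ge (w := u) (k := k + u.length) (by omega)
  refine ⟨(⟦(tw^[k] ub, u.length)⟧ : GrpF n), ?_⟩
  rw [GrpF.mk_mul]
  refine Quotient.sound ?_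
  show Eqv ((u ++ tw^[k] (tw^[k] ub)) ++ Dpow (n := n) 0) ([] ++ Dpow (k + u.length))
  rw [tpow_tpow]
  simpa [Dpow] using hub

lemma GrpF.exists_inv (g : GrpF n) : ∃ h, g * h = 1 ∧ h * g = 1 := by
  obtain ⟨b, hb⟩ := GrpF.exists_right_inv g
  obtain ⟨c, hc⟩ := GrpF.exists_right_inv b
  refine ⟨b, hb, ?_⟩
  calc b * g = b * g * (b * c) := by rw [hc, mul_one]
    _ = b * (g * b) * c := by rw [mul_assoc, mul_assoc, mul_assoc]
    _ = b * c := by rw [hb, mul_one]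
    _ = 1 := hc

noncomputable instance : Group (GrpF n) :=
  { (inferInstance : Monoid (GrpF n)) with
    inv := fun g => (GrpF.exists_inv g).choose
    inv_mul_cancel := fun g => (GrpF.exists_inv g).choose_spec.2 }

/-- the canonical hom from the braid group to the group of fractions -/
noncomputable def phiB : BraidGroup n →* GrpF n :=
  PresentedGroup.toGroup (f := fun i => (⟦([i], 0)⟧ : GrpF n)) (by
    rintro r (⟨i, j, hij, rfl⟩ | ⟨i, j, hij, rfl⟩)
    · rw [map_mul, map_mul, map_inv, map_mul, FreeGroup.lift_apply_of, FreeGroup.lift_apply_of,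
        mul_inv_eq_one]
      rw [GrpF.mk_mul, GrpF.mk_mul]
      refine Quotient.sound ?_
      show Eqv (([i] ++ tw^[0] [j]) ++ Dpow (n := n) 0) (([j] ++ tw^[0] [i]) ++ Dpow 0)
      simpa [Dpow] using swap_head (n := n) (.inl hij) []
    · rw [map_mul, map_mul, map_mul, map_inv, map_mul, map_mul, FreeGroup.lift_apply_of,
        FreeGroup.lift_apply_of, mul_inv_eq_one]
      rw [GrpF.mk_mul, GrpF.mk_mul, GrpF.mk_mul, GrpF.mk_mul]
      refine Quotient.sound ?_
      show Eqv ((([i] ++ tw^[0] [j]) ++ tw^[0] [i]) ++ Dpow (n := n) 0)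
        ((([j] ++ tw^[0] [i]) ++ tw^[0] [j]) ++ Dpow 0)
      simpa [Dpow] using braid_head (n := n) (.inl hij) [])

lemma phiB_gen (i : Fin (n-1)) : phiB (braidGen i) = (⟦([i], 0)⟧ : GrpF n) :=
  PresentedGroup.toGroup.of _

lemma phiB_eval : ∀ w : List (Fin (n-1)), phiB (evalPos w) = (⟦(w, 0)⟧ : GrpF n) := by
  intro w
  induction w with
  | nil => exact map_one _
  | cons i w ih =>
    rw [evalPos_cons, map_mul, phiB_gen, ih, GrpF.mk_mul]
    rfl

/-- injectivity : two positive words equal in the braid group are positively equivalent -/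
theorem eval_inj {u v : List (Fin (n-1))} (h : evalPos u = evalPos v) : Eqv u v := by
  have h1 := congrArg (phiB (n := n)) h
  rw [phiB_eval, phiB_eval] at h1
  have h2 := Quotient.exact h1
  have h3 : Eqv (u ++ Dpow (n := n) 0) (v ++ Dpow 0) := h2
  simpa [Dpow] using h3

lemma evalPos_mem (w : List (Fin (n-1))) : evalPos w ∈ PosBraid n := by
  induction w with
  | nil => exact Submonoid.one_mem _
  | cons i w ih =>
    rw [evalPos_cons]
    exact Submonoid.mul_mem _ (Submonoid.subset_closure ⟨i, rfl⟩) ih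

lemma mem_word {x : BraidGroup n} (hx : x ∈ PosBraid n) : ∃ w, evalPos w = x := by
  refine Submonoid.closure_induction ?_ ?_ ?_ hx
  · rintro y ⟨i, rfl⟩; exact ⟨[i], by simp [evalPos]⟩
  · exact ⟨[], rfl⟩
  · rintro y z _ _ ⟨wy, rfl⟩ ⟨wz, rfl⟩
    exact ⟨wy ++ wz, (evalPos_append wy wz)⟩

lemma evalC (m : ℕ) : evalPos (Cword (n := n) m) =
    ((List.range m).map (fun i => if h : i < n - 1 then braidGen (⟨i, h⟩ : Fin (n-1))
      else 1)).prod := by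
  induction m with
  | zero => rfl
  | succ m ih =>
    rw [Cword_succ, evalPos_append, List.range_succ, List.map_append, List.prod_append, ih]
    congr 1
    split
    · rename_i hh
      simp only [List.map_cons, List.map_nil, dif_pos hh]
      simp [evalPos]
    · rename_i hh
      simp only [List.map_cons, List.map_nil, dif_neg hh]
      simp [evalPos]

lemma braidDelta_eq : braidDelta n = evalPos (Dword (n := n) n) := by
  suffices h : ∀ m, deltaAux n m = evalPos (Dword (n := n) m) from h n
  intro m
  induction m with
  | zero => rfl
  | succ m ih =>
    show _ * _ = _
    rw [ih, ← evalC, ← evalPos_append]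
    rfl

lemma dvd_of_wdvd {u v : List (Fin (n-1))} (h : wdvd u v) :
    DividesL (evalPos u) (evalPos v) := by
  obtain ⟨w, hw⟩ := h
  exact ⟨evalPos w, evalPos_mem w, by rw [← evalPos_append, evalPos_eqv hw]⟩

lemma wdvd_of_dvd {u v : List (Fin (n-1))} (h : DividesL (evalPos u) (evalPos v)) :
    wdvd u v := by
  obtain ⟨z, hz, heq⟩ := h
  obtain ⟨wz, rfl⟩ := mem_word hz
  exact ⟨wz, eval_inj (by rw [evalPos_append, ← heq])⟩

lemma wdvd_append_left_mono (x : List (Fin (n-1))) {u v : List (Fin (n-1))} (h : wdvd u v) :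
    wdvd (x ++ u) (x ++ v) := by
  obtain ⟨w, hw⟩ := h
  exact ⟨w, by
    refine Eqv.trans (eqv_of_eq (by simp)) (hw.append_left x)⟩

/-- word-level key lemma, one-letter case -/
lemma keyL3 {f y : List (Fin (n-1))} {i : Fin (n-1)} (hfD : wdvd f (Dword (n := n) n))
    (hfy : wdvd f (i :: y)) :
    ∃ e, wdvd e (Dword (n := n) n) ∧ wdvd e y ∧ wdvd f (i :: e) := by
  have hiv : wdvd [i] (i :: y) := ⟨y, .rfl⟩
  obtain ⟨h, hfh, hih, hhv, huniv⟩ := lcm_exists ((i :: y).length + 1) (i :: y)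
    (Nat.lt_succ_self _) f [i] hfy hiv
  obtain ⟨e, he⟩ := hih
  -- he : Eqv ([i] ++ e) h
  have hhD : wdvd h (Dword (n := n) n) := huniv _ hfD (sigma_dvd_delta i)
  have hieD : wdvd (i :: e) (Dword (n := n) n) := wdvd_of_eqv_left he hhD
  obtain ⟨r, hr⟩ := hieD
  have heD : wdvd e (Dword (n := n) n) := mid_dvd_delta (x := [i]) (e := e) (w := r)
    (by refine Eqv.trans (eqv_of_eq (by simp)) hr)
  have hie : wdvd (i :: e) (i :: y) := wdvd_of_eqv_left he hhv
  exact ⟨e, heD, wdvd_cancel hie, wdvd_of_eqv_right he.symm hfh⟩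

/-- word-level key lemma -/
lemma keyL2 {d : List (Fin (n-1))} (hdD : wdvd d (Dword (n := n) n)) :
    ∀ (x : List (Fin (n-1))) {y : List (Fin (n-1))}, wdvd d (x ++ y) →
    ∃ e, wdvd e (Dword (n := n) n) ∧ wdvd e y ∧ wdvd d (x ++ e) := by
  intro x
  induction x using List.reverseRecOn with
  | nil =>
    intro y hd
    exact ⟨d, hdD, by simpa using hd, ⟨[], eqv_of_eq (by simp)⟩⟩
  | append_singleton x' i ih =>
    intro y hd
    have hd' : wdvd d (x' ++ (i :: y)) :=
      wdvd_of_eqv_right (eqv_of_eq (by simp)) hd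
    obtain ⟨f, hfD, hfy, hdf⟩ := ih hd'
    obtain ⟨e, heD, hey, hfe⟩ := keyL3 hfD hfy
    refine ⟨e, heD, hey, ?_⟩
    have h2 := hdf.trans (wdvd_append_left_mono x' hfe)
    exact wdvd_of_eqv_right (eqv_of_eq (by simp)) h2

/-- braid-group-level key lemma -/
lemma keyL2B {d x y : BraidGroup n} (hd : d ∈ PosBraid n) (hx : x ∈ PosBraid n)
    (hy : y ∈ PosBraid n) (hdD : DividesL d (braidDelta n)) (hdxy : DividesL d (x * y)) :
    ∃ e, e ∈ PosBraid n ∧ DividesL e (braidDelta n) ∧ DividesL e y ∧ DividesL d (x * e) := by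
  obtain ⟨wd, rfl⟩ := mem_word hd
  obtain ⟨wx, rfl⟩ := mem_word hx
  obtain ⟨wy, rfl⟩ := mem_word hy
  rw [braidDelta_eq] at hdD
  have h1 : wdvd wd (Dword (n := n) n) := wdvd_of_dvd hdD
  have h2 : wdvd wd (wx ++ wy) := wdvd_of_dvd (by rwa [evalPos_append])
  obtain ⟨we, heD, hey, hde⟩ := keyL2 h1 wx h2
  exact ⟨evalPos we, evalPos_mem we, by rw [braidDelta_eq]; exact dvd_of_wdvd heD,
    dvd_of_wdvd hey, by rw [← evalPos_append]; exact dvd_of_wdvd hde⟩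
end BraidProof

open BraidProof

/-- If `(s_1, …, s_p)` is a normal sequence of simple braids then
`s_1 = gcd_L(s_1 s_2 ⋯ s_p, Δ_n)`. -/
theorem normal_head_is_gcd (n : ℕ) (l : List (BraidGroup n))
    (hl : ∀ s ∈ l, Simple s) (hn : List.Chain' GNormal l) (h : l ≠ []) :
    IsLeftGcd (l.head h) l.prod (braidDelta n) := by
  induction l with
  | nil => exact absurd rfl h
  | cons s rest ih =>
    rcases rest with _ | ⟨t, rest⟩
    · -- singleton
      obtain ⟨hsP, hsD⟩ := hl s (by simp)
      have hprod : ([s] : List (BraidGroup n)).prod = s := by simp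
      refine ⟨hsP, ?_, ?_, ?_⟩
      · rw [List.head_cons, hprod]
        exact ⟨1, Submonoid.one_mem _, by rw [mul_one]⟩
      · rw [List.head_cons]; exact hsD
      · intro d _ hds _
        rw [List.head_cons]
        rwa [hprod] at hds
    · -- s :: t :: rest
      have hG : GNormal s t := (List.isChain_cons_cons.1 hn).1
      have hIH : IsLeftGcd ((t :: rest).head (by simp)) (t :: rest).prod (braidDelta n) :=
        ih (fun x hx => hl x (by simp [hx])) (List.isChain_cons_cons.1 hn).2 (by simp)
      rw [List.head_cons] at hIH
      have hsP : s ∈ PosBraid n := (hl s (by simp)).1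
      have hTP : (t :: rest).prod ∈ PosBraid n := by
        refine Submonoid.list_prod_mem _ ?_
        intro x hx
        exact (hl x (by simp [hx])).1
      have hprod : (s :: t :: rest).prod = s * (t :: rest).prod := List.prod_cons
      rw [List.head_cons, hprod]
      refine ⟨hsP, ⟨(t :: rest).prod, hTP, rfl⟩, hG.2.2.1, ?_⟩
      intro d hdP hdprod hdD
      obtain ⟨e, heP, heD, heT, hdse⟩ := keyL2B hdP hsP hTP hdD hdprod
      -- e divides t by the induction hypothesis
      have het : DividesL e t := hIH.2.2.2 e heP heT heD
      -- hence d divides s * t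
      obtain ⟨z, hzP, hz⟩ := hdse
      obtain ⟨w, hwP, hw⟩ := het
      have hdst : DividesL d (s * t) := by
        refine ⟨z * w, Submonoid.mul_mem _ hzP hwP, ?_⟩
        rw [hw, ← mul_assoc, hz, mul_assoc]
      exact hG.2.2.2 d hdP hdst hdD
end

section
/- Reducing a handle preserves the represented braid: if w = σ_i^e w_0 σ_{i+1}^d w_1 ... w_m σ_i^{-e} is a σ_i-handle and w' = w_0 (σ_{i+1}^{-e} σ_i^d σ_{i+1}^e) w_1 ... (σ_{i+1}^{-e} σ_i^d σ_{i+1}^e) w_m is its reduct, then w and w' represent the same element of B_n. -/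
/-- One step of reduction of a `σ_i`-handle.  In the first case the handle
contains no letter `σ_{i+1}^{±1}` (so `m = 0`); in the second case the factors
`w_0, …, w_m` (with `m ≥ 1`) are separated by the letters `σ_{i+1}^d`, and each
of them is replaced by `σ_{i+1}^{-e} σ_i^d σ_{i+1}^e` in the reduct. -/
inductive HandleRed {n : ℕ} (i : Fin (n - 1)) : BWord n → BWord n → Prop where
  | simple (u v w0 : BWord n) (e : Bool)
      (hw : ∀ x ∈ w0, (i : ℕ) + 1 < ((x.1 : Fin (n - 1)) : ℕ)) :
      HandleRed i (u ++ [(i, e)] ++ w0 ++ [(i, !e)] ++ v) (u ++ w0 ++ v)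
  | sep (u v : BWord n) (j : Fin (n - 1)) (hj : (j : ℕ) = (i : ℕ) + 1)
      (e d : Bool) (ws : List (BWord n)) (hlen : 2 ≤ ws.length)
      (hw : ∀ u' ∈ ws, ∀ x ∈ u', (i : ℕ) + 1 < ((x.1 : Fin (n - 1)) : ℕ)) :
      HandleRed i (u ++ [(i, e)] ++ List.intercalate [(j, d)] ws ++ [(i, !e)] ++ v)
                  (u ++ List.intercalate [(j, !e), (i, d), (j, e)] ws ++ v)

namespace HandleAux

variable {n : ℕ}

/-- The braid element of a single signed letter. -/
def gl (x : Fin (n - 1) × Bool) : BraidGroup n :=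
  if x.2 then braidGen x.1 else (braidGen x.1)⁻¹

lemma evalWord_append (u v : BWord n) :
    evalWord (u ++ v) = evalWord u * evalWord v := by
  simp [evalWord]

lemma evalWord_single (x : Fin (n - 1) × Bool) : evalWord [x] = gl x := by
  simp [evalWord, gl]

lemma evalWord_triple (x y z : Fin (n - 1) × Bool) :
    evalWord [x, y, z] = gl x * gl y * gl z := by
  simp [evalWord, gl, mul_assoc]

lemma gl_not (k : Fin (n - 1)) (e : Bool) : gl (k, !e) = (gl (k, e))⁻¹ := by
  cases e <;> simp [gl]

lemma rel_eq_one {r : FreeGroup (Fin (n - 1))} (hr : r ∈ braidRels n) :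
    (QuotientGroup.mk r : PresentedGroup (braidRels n)) = 1 :=
  (QuotientGroup.eq_one_iff r).mpr (Subgroup.subset_normalClosure hr)

lemma braidGen_eq (k : Fin (n - 1)) :
    braidGen k = (QuotientGroup.mk (FreeGroup.of k) : PresentedGroup (braidRels n)) := rfl

lemma braid_comm {i j : Fin (n - 1)} (h : (i : ℕ) + 2 ≤ (j : ℕ)) :
    Commute (braidGen (n := n) i) (braidGen j) := by
  have h1 := rel_eq_one (n := n) (Or.inl ⟨i, j, h, rfl⟩)
  rw [QuotientGroup.mk_mul, QuotientGroup.mk_inv, QuotientGroup.mk_mul, QuotientGroup.mk_mul,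
    mul_inv_eq_one] at h1
  exact h1

lemma braid_rel {i j : Fin (n - 1)} (h : (i : ℕ) + 1 = (j : ℕ)) :
    braidGen (n := n) i * braidGen j * braidGen i = braidGen j * braidGen i * braidGen j := by
  have h1 := rel_eq_one (n := n) (Or.inr ⟨i, j, h, rfl⟩)
  rw [QuotientGroup.mk_mul, QuotientGroup.mk_inv, QuotientGroup.mk_mul, QuotientGroup.mk_mul,
    QuotientGroup.mk_mul, mul_inv_eq_one] at h1
  exact h1

lemma commute_letters {i : Fin (n - 1)} (e : Bool) (w : BWord n)
    (hw : ∀ x ∈ w, (i : ℕ) + 1 < ((x.1 : Fin (n - 1)) : ℕ)) :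
    Commute (gl (i, e)) (evalWord w) := by
  apply Commute.list_prod_right
  intro y hy
  obtain ⟨x, hx, rfl⟩ := List.mem_map.mp hy
  have hc : Commute (braidGen (n := n) i) (braidGen x.1) := braid_comm (by have := hw x hx; omega)
  cases e <;> rcases x with ⟨k, (_ | _)⟩ <;> simp [gl] <;>
    first
      | exact hc.inv_left.inv_right
      | exact hc.inv_left
      | exact hc.inv_right
      | exact hc

lemma conj_key {i j : Fin (n - 1)} (hj : (j : ℕ) = (i : ℕ) + 1) (e d : Bool) :
    gl (i, e) * gl (j, d) * (gl (i, e))⁻¹ = gl (j, !e) * gl (i, d) * gl (j, e) := by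
  set a := braidGen (n := n) i with ha
  set b := braidGen (n := n) j with hb
  have h : a * b * a = b * a * b := braid_rel hj.symm
  have tt : a * b * a⁻¹ = b⁻¹ * a * b := by
    have h2 : b * (a * b * a⁻¹ * a) = b * (b⁻¹ * a * b * a) := by
      calc b * (a * b * a⁻¹ * a) = b * a * b := by group
        _ = a * b * a := h.symm
        _ = b * (b⁻¹ * a * b * a) := by group
    exact mul_right_cancel (mul_left_cancel h2)
  have ft : a⁻¹ * b * a = b * a * b⁻¹ := by
    have h2 : a * (a⁻¹ * b * a * b) = a * (b * a * b⁻¹ * b) := by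
      calc a * (a⁻¹ * b * a * b) = b * a * b := by group
        _ = a * b * a := h.symm
        _ = a * (b * a * b⁻¹ * b) := by group
    exact mul_right_cancel (mul_left_cancel h2)
  have tf : a * b⁻¹ * a⁻¹ = b⁻¹ * a⁻¹ * b := by
    calc a * b⁻¹ * a⁻¹ = (a * b * a⁻¹)⁻¹ := by group
      _ = (b⁻¹ * a * b)⁻¹ := by rw [tt]
      _ = b⁻¹ * a⁻¹ * b := by group
  have ff : a⁻¹ * b⁻¹ * a = b * a⁻¹ * b⁻¹ := by
    calc a⁻¹ * b⁻¹ * a = (a⁻¹ * b * a)⁻¹ := by group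
      _ = (b * a * b⁻¹)⁻¹ := by rw [ft]
      _ = b * a⁻¹ * b⁻¹ := by group
  cases e <;> cases d <;> simp only [gl, Bool.not_true, Bool.not_false, if_true, if_false,
    inv_inv, ← ha, ← hb]
  · exact ff
  · exact ft
  · exact tf
  · exact tt

lemma inter_conj (A : BraidGroup n) (S S' : BWord n)
    (hS : A * evalWord S * A⁻¹ = evalWord S')
    (ws : List (BWord n)) (hws : ∀ u ∈ ws, Commute A (evalWord u)) :
    A * evalWord (List.intercalate S ws) * A⁻¹ = evalWord (List.intercalate S' ws) := by
  induction ws with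
  | nil => simp [List.intercalate, evalWord]
  | cons x xs ih =>
    have hx : Commute A (evalWord x) := hws x List.mem_cons_self
    have hx' : A * evalWord x * A⁻¹ = evalWord x := by
      rw [hx.eq, mul_assoc, mul_inv_cancel, mul_one]
    cases xs with
    | nil =>
      simpa [List.intercalate] using hx'
    | cons y ys =>
      have hic : ∀ (T : BWord n), List.intercalate T (x :: y :: ys)
          = x ++ T ++ List.intercalate T (y :: ys) := by
        intro T
        simp [List.intercalate, List.intersperse]
      rw [hic S, hic S', evalWord_append, evalWord_append, evalWord_append, evalWord_append]
      have ihv := ih (fun u hu => hws u (List.mem_cons_of_mem x hu))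
      calc A * (evalWord x * evalWord S * evalWord (List.intercalate S (y :: ys))) * A⁻¹
          = (A * evalWord x * A⁻¹) * (A * evalWord S * A⁻¹) *
              (A * evalWord (List.intercalate S (y :: ys)) * A⁻¹) := by group
        _ = evalWord x * evalWord S' * evalWord (List.intercalate S' (y :: ys)) := by
            rw [hx', hS, ihv]

end HandleAux

open HandleAux

/-- Reducing a handle preserves the represented braid: the handle and its
reduct represent the same element of `B_n`. -/
theorem handle_reduction_equiv (n : ℕ) (i : Fin (n - 1)) (w w' : BWord n)
    (h : HandleRed i w w') : evalWord w = evalWord w' := by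
  cases h with
  | simple u v w0 e hw =>
    have hc := commute_letters e w0 hw
    have h2 : gl (i, e) * evalWord w0 * (gl (i, e))⁻¹ = evalWord w0 := by
      rw [hc.eq, mul_assoc, mul_inv_cancel, mul_one]
    simp only [evalWord_append, evalWord_single, gl_not]
    calc evalWord u * gl (i, e) * evalWord w0 * (gl (i, e))⁻¹ * evalWord v
        = evalWord u * (gl (i, e) * evalWord w0 * (gl (i, e))⁻¹) * evalWord v := by group
      _ = evalWord u * evalWord w0 * evalWord v := by rw [h2]
  | sep u v j hj e d ws hlen hw =>
    have hS : gl (i, e) * evalWord [(j, d)] * (gl (i, e))⁻¹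
        = evalWord [(j, !e), (i, d), (j, e)] := by
      rw [evalWord_single, evalWord_triple]
      exact conj_key hj e d
    have key := inter_conj (gl (i, e)) [(j, d)] [(j, !e), (i, d), (j, e)] hS ws
      (fun u' hu' => commute_letters e u' (hw u' hu'))
    simp only [evalWord_append, evalWord_single, gl_not]
    calc evalWord u * gl (i, e) * evalWord (List.intercalate [(j, d)] ws) * (gl (i, e))⁻¹ *
          evalWord v
        = evalWord u * (gl (i, e) * evalWord (List.intercalate [(j, d)] ws) * (gl (i, e))⁻¹) *
          evalWord v := by group
      _ = evalWord u * evalWord (List.intercalate [(j, !e), (i, d), (j, e)] ws) * evalWord v := by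
          rw [key]
end
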